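/- Assume that every strongly separated topological space of cardinality 𝔠 contains an uncountable discrete subspace. Then for every Hausdorff topological space X of countable spread and every point x ∈ X, there is a family 𝒰 of open subsets of X with |𝒰| < 𝔠 and ⋂𝒰 = {x}; that is, every point of X has pseudo-character less than 𝔠. -/

import Mathlib

universe u

open Cardinal

/-- A topological space is *strongly left separated* if it has a well-ordering `r` such that
every point `x` has a closed neighborhood `W x` (a closed set containing `x` in its interior)
containing no `r`-predecessor of `x`. -/
def StronglyLeftSeparated (X : Type u) [TopologicalSpace X] : Prop :=
  ∃ r : X → X → Prop, IsWellOrder X r ∧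
    ∃ W : X → Set X, ∀ x : X, IsClosed (W x) ∧ x ∈ interior (W x) ∧
      ∀ y : X, r y x → y ∉ W x

/-- A topological space is *strongly right separated* if it has a well-ordering `r` such that
every point `x` has a closed neighborhood `W x` containing no `r`-successor of `x`. -/
def StronglyRightSeparated (X : Type u) [TopologicalSpace X] : Prop :=
  ∃ r : X → X → Prop, IsWellOrder X r ∧
    ∃ W : X → Set X, ∀ x : X, IsClosed (W x) ∧ x ∈ interior (W x) ∧
      ∀ y : X, r x y → y ∉ W x

/-- A space is *strongly separated* if it is strongly left or strongly right separated. -/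
def StronglySeparated (X : Type u) [TopologicalSpace X] : Prop :=
  StronglyLeftSeparated X ∨ StronglyRightSeparated X

/-- Assume every strongly separated topological space of cardinality `𝔠` contains an
uncountable discrete subspace.  Then in every Hausdorff space `X` of countable spread every
point `x` has pseudo-character `< 𝔠`: there is a family `𝒰` of open sets with `|𝒰| < 𝔠`
whose intersection is `{x}`. -/
theorem stmt14 {X : Type u} [TopologicalSpace X] [T2Space X]
    (hss : ∀ (Y : Type u) [TopologicalSpace Y], Cardinal.mk Y = continuum →
      StronglySeparated Y → ∃ D : Set Y, ¬ D.Countable ∧ DiscreteTopology D)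
    (hspread : ∀ D : Set X, DiscreteTopology D → D.Countable) (x : X) :
    ∃ 𝒰 : Set (Set X), (∀ U ∈ 𝒰, IsOpen U) ∧ Cardinal.mk 𝒰 < continuum ∧
      ⋂₀ 𝒰 = {x} := by
  by_contra hcon
  push_neg at hcon
  have hP : ∀ 𝒰 : Set (Set X), (∀ U ∈ 𝒰, IsOpen U) → Cardinal.mk 𝒰 < continuum →
      ⋂₀ 𝒰 ≠ {x} := fun 𝒰 h1 h2 => hcon 𝒰 h1 h2
  -- separation data: for every `z`, open sets `Ux z ∋ x` and `Vx z ∋ z` (when `z ≠ x`),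
  -- disjoint from each other
  have sep : ∀ z : X, ∃ UV : Set X × Set X, IsOpen UV.1 ∧ IsOpen UV.2 ∧ x ∈ UV.1 ∧
      (z ≠ x → z ∈ UV.2) ∧ Disjoint UV.1 UV.2 := by
    intro z
    by_cases hz : z = x
    · exact ⟨(Set.univ, ∅), isOpen_univ, isOpen_empty, Set.mem_univ x,
        fun h => absurd hz h, Set.disjoint_empty _⟩
    · obtain ⟨u, v, hu, hv, hzu, hxv, hd⟩ := t2_separation hz
      exact ⟨(v, u), hv, hu, hxv, fun _ => hzu, hd.symm⟩
  set Ux : X → Set X := fun z => (Classical.choose (sep z)).1 with hUx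
  set Vx : X → Set X := fun z => (Classical.choose (sep z)).2 with hVx
  have hUopen : ∀ z, IsOpen (Ux z) := fun z => (Classical.choose_spec (sep z)).1
  have hVopen : ∀ z, IsOpen (Vx z) := fun z => (Classical.choose_spec (sep z)).2.1
  have hxU : ∀ z, x ∈ Ux z := fun z => (Classical.choose_spec (sep z)).2.2.1
  have hzV : ∀ z, z ≠ x → z ∈ Vx z := fun z => (Classical.choose_spec (sep z)).2.2.2.1
  have hdisj : ∀ z, Disjoint (Ux z) (Vx z) := fun z => (Classical.choose_spec (sep z)).2.2.2.2
  -- the recursive step: given fewer than `𝔠` previously chosen points, we can choose a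
  -- new point different from `x` lying in all their `Ux`-sets
  have hstep : ∀ (i : continuum.{u}.ord.ToType) (f : {j // j < i} → X),
      ∃ z : X, z ≠ x ∧ ∀ j : {j // j < i}, z ∈ Ux (f j) := by
    intro i f
    set 𝒰 : Set (Set X) := Set.range (fun j : {j // j < i} => Ux (f j)) with h𝒰
    have hopen : ∀ U ∈ 𝒰, IsOpen U := by rintro U ⟨j, rfl⟩; exact hUopen _
    have hcard : Cardinal.mk 𝒰 < continuum := by
      refine lt_of_le_of_lt (Cardinal.mk_range_le) ?_
      exact Cardinal.mk_Iio_ord_toType i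
    have hne := hP 𝒰 hopen hcard
    have hxmem : x ∈ ⋂₀ 𝒰 := by rintro U ⟨j, rfl⟩; exact hxU _
    have : ¬ ⋂₀ 𝒰 ⊆ {x} := by
      intro hsub
      exact hne (le_antisymm hsub (by simpa using hxmem))
    obtain ⟨z, hz1, hz2⟩ := Set.not_subset.1 this
    refine ⟨z, by simpa using hz2, fun j => hz1 _ ⟨j, rfl⟩⟩
  -- the transfinite recursion of length `𝔠`
  let y : continuum.{u}.ord.ToType → X :=
    IsWellFounded.fix ((· < ·) : continuum.{u}.ord.ToType → continuum.{u}.ord.ToType → Prop)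
      (fun i rec => Classical.choose (hstep i (fun j => rec j.1 j.2)))
  have hy : ∀ i, y i = Classical.choose (hstep i (fun j => y j.1)) := fun i =>
    IsWellFounded.fix_eq _ _ i
  have hyspec : ∀ i, y i ≠ x ∧ ∀ j : {j // j < i}, y i ∈ Ux (y j.1) := by
    intro i
    have := Classical.choose_spec (hstep i (fun j => y j.1))
    rwa [← hy i] at this
  have hyne : ∀ i, y i ≠ x := fun i => (hyspec i).1
  have hyU : ∀ j i, j < i → y i ∈ Ux (y j) := fun j i hj => (hyspec i).2 ⟨j, hj⟩
  -- the closure of `Vx z` avoids `Ux z`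
  have hclV : ∀ z, closure (Vx z) ⊆ (Ux z)ᶜ := fun z =>
    closure_minimal (Set.disjoint_left.1 (hdisj z).symm) (hUopen z).isClosed_compl
  -- injectivity of `y`
  have hyij : ∀ j i, j < i → y i ≠ y j := by
    intro j i hji heq
    have h1 : y i ∈ Ux (y j) := hyU j i hji
    have h2 : y j ∈ Vx (y j) := hzV _ (hyne j)
    rw [heq] at h1
    exact Set.disjoint_left.1 (hdisj (y j)) h1 h2
  have hinj : Function.Injective y := by
    intro a b hab
    rcases lt_trichotomy a b with h | h | h
    · exact absurd hab.symm (hyij a b h)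
    · exact h
    · exact absurd hab (hyij b a h)
  -- the subspace `Y = range y` has cardinality `𝔠`
  set Y : Set X := Set.range y with hY
  have hmkY : Cardinal.mk Y = continuum := by
    rw [hY, Cardinal.mk_range_eq y hinj, Cardinal.mk_ord_toType]
  let e : continuum.{u}.ord.ToType ≃ Y := Equiv.ofInjective y hinj
  have heval : ∀ a : Y, (a : X) = y (e.symm a) := by
    intro a
    conv_lhs => rw [← e.apply_symm_apply a]
    rfl
  -- the induced well-order on `Y`
  set r : Y → Y → Prop := fun a b => e.symm a < e.symm b with hr
  have hwo : IsWellOrder Y r := by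
    haveI : IsWellOrder continuum.{u}.ord.ToType (· < ·) := isWellOrder_lt
    have emb : r ↪r ((· < ·) : continuum.{u}.ord.ToType → continuum.{u}.ord.ToType → Prop) :=
      ⟨⟨fun a => e.symm a, e.symm.injective⟩, Iff.rfl⟩
    exact emb.isWellOrder
  -- the closed neighborhoods witnessing strong right separation
  set W : Y → Set Y := fun a => (Subtype.val : Y → X) ⁻¹' closure (Vx (a : X)) with hW
  have hsrs : StronglyRightSeparated Y := by
    refine ⟨r, hwo, W, fun a => ⟨?_, ?_, ?_⟩⟩
    · exact isClosed_closure.preimage continuous_subtype_val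
    · have h1 : IsOpen ((Subtype.val : Y → X) ⁻¹' Vx (a : X)) :=
        (hVopen _).preimage continuous_subtype_val
      have h2 : a ∈ (Subtype.val : Y → X) ⁻¹' Vx (a : X) := by
        have : (a : X) ≠ x := heval a ▸ hyne _
        exact hzV _ this
      have h3 : (Subtype.val : Y → X) ⁻¹' Vx (a : X) ⊆ W a :=
        Set.preimage_mono subset_closure
      exact interior_maximal h3 h1 h2
    · intro b hab hbW
      have hb : (b : X) ∈ Ux (y (e.symm a)) := by
        rw [heval b]; exact hyU _ _ hab
      have : (b : X) ∈ closure (Vx (a : X)) := hbW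
      rw [heval a] at this
      exact hclV _ this hb
  -- apply the hypothesis to get an uncountable discrete subspace
  obtain ⟨D, hDc, hDd⟩ := hss Y hmkY (Or.inr hsrs)
  -- transfer it down to `X`, contradicting countable spread
  set f : D → X := fun d => (d : Y) with hf
  have hfemb : Topology.IsEmbedding f :=
    Topology.IsEmbedding.subtypeVal.comp Topology.IsEmbedding.subtypeVal
  let h : D ≃ₜ Set.range f := Topology.IsEmbedding.toHomeomorph hfemb
  have hdisc : DiscreteTopology (Set.range f) :=
    h.symm.isEmbedding.discreteTopology
  have hcount := hspread (Set.range f) hdisc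
  have : Countable D := by
    have : Countable (Set.range f) := hcount.to_subtype
    exact h.symm.surjective.countable
  exact hDc (Set.countable_coe_iff.mp this)
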